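/- If A is an infinite set of positive integers containing no 3-term arithmetic progression, then the set B = {(a + m, m) : a \in A, m \ge 1} is a counterexample to the Graham conjecture for s = 2 whenever \sum_{a \in A} 1/a = \infty; that is, \sum_{(x,y) \in B} 1/(x^2+y^2) = \infty and B contains no axes-parallel square. -/

import Mathlib

open scoped ENNReal

/-- B = {(a + m, m) : a ∈ A, m ≥ 1}. -/
def shiftSet (A : Set ℕ) : Set (ℕ × ℕ) :=
  {p | ∃ a ∈ A, ∃ m, 1 ≤ m ∧ p = (a + m, m)}

theorem stmt10 (A : Set ℕ) (hA : ∀ a ∈ A, 0 < a) (hinf : A.Infinite)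
    (hAP : ¬ ∃ a d : ℕ, 0 < d ∧ a ∈ A ∧ a + d ∈ A ∧ a + 2 * d ∈ A)
    (hdiv : ∑' a : A, (1 / (a : ℝ≥0∞)) = ⊤) :
    (∑' p : shiftSet A, (1 / ((p.1.1 : ℝ≥0∞) ^ 2 + (p.1.2 : ℝ≥0∞) ^ 2)) = ⊤) ∧
    ¬ ∃ x y l : ℕ, 0 < l ∧ (x, y) ∈ shiftSet A ∧ (x + l, y) ∈ shiftSet A ∧
      (x, y + l) ∈ shiftSet A ∧ (x + l, y + l) ∈ shiftSet A := by
  constructor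
  · -- divergence
    set F : ℕ × ℕ → ℝ≥0∞ := fun p => 1 / ((p.1 : ℝ≥0∞) ^ 2 + (p.2 : ℝ≥0∞) ^ 2) with hF
    have key : (⊤ : ℝ≥0∞) ≤ ∑' p : shiftSet A, F p := by
      set g : (Σ a : A, Fin (a : ℕ)) → shiftSet A := fun i =>
        ⟨((i.1 : ℕ) + ((i.2 : ℕ) + 1), (i.2 : ℕ) + 1),
          ⟨(i.1 : ℕ), i.1.2, (i.2 : ℕ) + 1, by omega, rfl⟩⟩ with hg
      have hginj : Function.Injective g := by
        intro i j hij
        obtain ⟨⟨a, ha⟩, k⟩ := i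
        obtain ⟨⟨b, hb⟩, l⟩ := j
        simp only [hg, Subtype.ext_iff, Prod.mk.injEq] at hij
        obtain ⟨h1, h2⟩ := hij
        have hab : a = b := by omega
        subst hab
        have hkl : k = l := Fin.ext (by omega)
        subst hkl
        rfl
      have h1 : ∑' i, F ((g i : ℕ × ℕ)) ≤ ∑' p : shiftSet A, F p :=
        ENNReal.tsum_comp_le_tsum_of_injective hginj _
      refine le_trans ?_ h1
      have h2 : ∀ i : (Σ a : A, Fin (a : ℕ)),
          1 / (5 * ((i.1 : ℕ) : ℝ≥0∞) ^ 2) ≤ F ((g i : ℕ × ℕ)) := by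
        rintro ⟨⟨a, ha⟩, k⟩
        have hk : (k : ℕ) + 1 ≤ a := k.2
        have hle : ((a + ((k : ℕ) + 1)) ^ 2 + ((k : ℕ) + 1) ^ 2 : ℕ) ≤ 5 * a ^ 2 := by
          nlinarith
        simp only [hF, hg]
        gcongr
        push_cast
        exact_mod_cast (by exact_mod_cast Nat.cast_le.mpr hle : (((a + ((k:ℕ)+1)) ^ 2 + ((k:ℕ)+1) ^ 2 : ℕ) : ℝ≥0∞) ≤ ((5 * a ^ 2 : ℕ) : ℝ≥0∞))
      refine le_trans ?_ (ENNReal.tsum_le_tsum h2)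
      rw [ENNReal.tsum_sigma']
      have h3 : ∀ a : A, ∑' k : Fin (a : ℕ), 1 / (5 * ((a : ℕ) : ℝ≥0∞) ^ 2)
          = 5⁻¹ * ((a : ℕ) : ℝ≥0∞)⁻¹ := by
        intro a
        have ha0 : ((a : ℕ) : ℝ≥0∞) ≠ 0 := by
          exact_mod_cast (hA a a.2).ne'
        have hat : ((a : ℕ) : ℝ≥0∞) ≠ ⊤ := by simp
        rw [tsum_fintype, Finset.sum_const, Finset.card_univ, Fintype.card_fin,
          nsmul_eq_mul]
        rw [show (5 : ℝ≥0∞) * ((a : ℕ) : ℝ≥0∞) ^ 2 = (5 * (a : ℕ)) * (a : ℕ) by push_cast; ring]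
        rw [one_div, ENNReal.mul_inv (Or.inr hat) (Or.inr ha0),
          ENNReal.mul_inv (Or.inl (by norm_num)) (Or.inl (by norm_num))]
        rw [show ((a:ℕ):ℝ≥0∞) * (5⁻¹ * ((a:ℕ):ℝ≥0∞)⁻¹ * ((a:ℕ):ℝ≥0∞)⁻¹)
            = (((a:ℕ):ℝ≥0∞) * ((a:ℕ):ℝ≥0∞)⁻¹) * (5⁻¹ * ((a:ℕ):ℝ≥0∞)⁻¹) by ring]
        rw [ENNReal.mul_inv_cancel ha0 hat, one_mul]
      rw [tsum_congr h3, ENNReal.tsum_mul_left]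
      have : ∑' a : A, ((a : ℕ) : ℝ≥0∞)⁻¹ = ⊤ := by
        simpa [one_div] using hdiv
      rw [this, ENNReal.mul_top (by simp)]
    exact top_le_iff.mp key
  · rintro ⟨x, y, l, hl, ⟨a1, ha1, m1, hm1, he1⟩, ⟨a2, ha2, m2, hm2, he2⟩,
      ⟨a3, ha3, m3, hm3, he3⟩, ⟨a4, ha4, m4, hm4, he4⟩⟩
    simp only [Prod.mk.injEq] at he1 he2 he3 he4
    apply hAP
    refine ⟨a3, l, hl, ha3, ?_, ?_⟩
    · have : a3 + l = a1 := by omega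
      rwa [this]
    · have : a3 + 2 * l = a2 := by omega
      rwa [this]
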